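/- arXiv:2405.07379 — 2 statements merged into one kernel-verified Lean document; each statement's English description precedes it below -/
import Mathlib

section
/- Let $\rho$ be an $N\times N$ density matrix ($N=2J+1$) and let $A_0,\dots,A_{2J}$ be the rank-one spectral projections of $J_z=\operatorname{diag}(J,J-1,\dots,-J)$. Define $V(\rho)=\frac12\sum_{n\neq m}\sqrt{\operatorname{Tr}(\rho A_n)\operatorname{Tr}(\rho A_m)}$ and the Bures distance to the set $\bar E=\{A_0,\dots,A_{2J}\}$ by $d_B(\rho,\bar E)=\min_n\sqrt{2-2\sqrt{\operatorname{Tr}(\rho A_n)}}$. Then $\frac12 d_B(\rho,\bar E) \leq V(\rho) \leq J(2J+1)\, d_B(\rho,\bar E)$. -/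
open Matrix BigOperators
open scoped ComplexOrder

/-- The diagonal rank-one projection onto the `n`-th standard basis vector. -/
noncomputable def projA {N : ℕ} (n : Fin N) : Matrix (Fin N) (Fin N) ℂ :=
  Matrix.single n n 1

lemma trace_mul_projA {N : ℕ} (ρ : Matrix (Fin N) (Fin N) ℂ) (n : Fin N) :
    (ρ * projA n).trace = ρ n n := by
  simp only [projA, Matrix.trace, Matrix.diag, Matrix.mul_apply, Matrix.single]
  rw [Finset.sum_eq_single n]
  · simp
  · intro b _ hb
    apply Finset.sum_eq_zero
    intro m _
    simp [Ne.symm hb]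
  · simp

/-- Comparison between the Lyapunov function
`V(ρ) = ½ ∑_{n≠m} √(Tr(ρAₙ)Tr(ρAₘ))` and the Bures distance
`d_B(ρ, Ē) = min_n √(2 - 2√Tr(ρAₙ))` to the set of spectral projections:
`½ d_B ≤ V ≤ J(2J+1) d_B` with `J = twoJ/2` and `N = 2J+1`. -/
theorem lyapunov_bures_comparison {twoJ : ℕ} (hJ : 0 < twoJ)
    (ρ : Matrix (Fin (twoJ + 1)) (Fin (twoJ + 1)) ℂ)
    (hρ : ρ.PosSemidef) (hρtr : ρ.trace = 1) :
    (1 / 2) *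
        (Finset.univ.inf' Finset.univ_nonempty
          (fun n => Real.sqrt (2 - 2 * Real.sqrt (((ρ * projA n).trace).re)))) ≤
      (1 / 2) * ∑ n, ∑ m, (if n ≠ m then
          Real.sqrt (((ρ * projA n).trace).re * ((ρ * projA m).trace).re) else 0) ∧
    (1 / 2) * ∑ n, ∑ m, (if n ≠ m then
          Real.sqrt (((ρ * projA n).trace).re * ((ρ * projA m).trace).re) else 0) ≤
      ((twoJ : ℝ) / 2) * ((twoJ : ℝ) + 1) *
        (Finset.univ.inf' Finset.univ_nonempty
          (fun n => Real.sqrt (2 - 2 * Real.sqrt (((ρ * projA n).trace).re)))) := by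
  set p : Fin (twoJ + 1) → ℝ := fun n => ((ρ * projA n).trace).re with hpdef
  have htr : ∀ n, p n = (ρ n n).re := fun n => by
    simp only [hpdef, trace_mul_projA]
  have hp0 : ∀ n, 0 ≤ p n := by
    intro n
    rw [htr n]
    have h := hρ.re_dotProduct_nonneg (Pi.single n 1)
    simpa [dotProduct, Matrix.mulVec, Pi.single_apply, Finset.sum_ite_eq] using h
  have hsum : ∑ n, p n = 1 := by
    have h := congrArg Complex.re hρtr
    simp only [Matrix.trace, Matrix.diag, Complex.re_sum, Complex.one_re] at h
    simpa only [htr] using h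
  have hp1 : ∀ n, p n ≤ 1 := by
    intro n
    rw [← hsum]
    exact Finset.single_le_sum (fun i _ => hp0 i) (Finset.mem_univ n)
  obtain ⟨n₀, -, hmax⟩ := Finset.exists_max_image Finset.univ p Finset.univ_nonempty
  have hppos : 0 < p n₀ := by
    by_contra h
    push_neg at h
    have hz : ∑ n, p n = 0 := Finset.sum_eq_zero fun n _ =>
      le_antisymm (le_trans (hmax n (Finset.mem_univ n)) h) (hp0 n)
    rw [hsum] at hz; norm_num at hz
  set t := Real.sqrt (p n₀) with htdef
  have ht0 : 0 < t := Real.sqrt_pos.mpr hppos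
  have ht1 : t ≤ 1 := Real.sqrt_le_one.mpr (hp1 n₀)
  have hpt : p n₀ = t ^ 2 := (Real.sq_sqrt (hp0 n₀)).symm
  have hsqle : ∀ n, Real.sqrt (p n) ≤ t := fun n =>
    Real.sqrt_le_sqrt (hmax n (Finset.mem_univ n))
  set S := ∑ n, Real.sqrt (p n) with hSdef
  -- the double sum equals S² - 1
  have key : (∑ n, ∑ m, (if n ≠ m then Real.sqrt (p n * p m) else 0)) = S * S - 1 := by
    have inner : ∀ n, (∑ m, (if n ≠ m then Real.sqrt (p n * p m) else 0))
        = Real.sqrt (p n) * S - p n := by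
      intro n
      have hpt2 : ∀ m, (if n ≠ m then Real.sqrt (p n * p m) else 0)
          = Real.sqrt (p n) * Real.sqrt (p m)
            - (if n = m then Real.sqrt (p n) * Real.sqrt (p m) else 0) := by
        intro m
        by_cases h : n = m <;> simp [h, Real.sqrt_mul (hp0 n)]
      rw [Finset.sum_congr rfl (fun m _ => hpt2 m), Finset.sum_sub_distrib,
        Finset.sum_ite_eq]
      simp [← Finset.mul_sum, ← hSdef, Real.mul_self_sqrt (hp0 n)]
    rw [Finset.sum_congr rfl (fun n _ => inner n), Finset.sum_sub_distrib,
      ← Finset.sum_mul, ← hSdef, hsum]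
  -- the inf equals √(2-2t)
  set D := Finset.univ.inf' Finset.univ_nonempty
      (fun n => Real.sqrt (2 - 2 * Real.sqrt (p n))) with hDdef
  have hDle : D ≤ Real.sqrt (2 - 2 * t) :=
    Finset.inf'_le _ (Finset.mem_univ n₀)
  have hDge : Real.sqrt (2 - 2 * t) ≤ D := by
    apply Finset.le_inf'
    intro n _
    apply Real.sqrt_le_sqrt
    have := hsqle n
    linarith
  -- lower bound : √(2-2t) ≤ S*S - 1
  have hS1 : 1 ≤ t * S := by
    calc (1 : ℝ) = ∑ n, p n := hsum.symm
      _ ≤ ∑ n, t * Real.sqrt (p n) := by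
          apply Finset.sum_le_sum
          intro n _
          nlinarith [hsqle n, Real.sqrt_nonneg (p n), Real.sq_sqrt (hp0 n)]
      _ = t * S := by rw [← Finset.mul_sum]
  have hS2 : t + Real.sqrt (1 - t ^ 2) ≤ S := by
    have herase : ∑ n ∈ Finset.univ.erase n₀, p n = 1 - p n₀ := by
      have := Finset.add_sum_erase Finset.univ p (Finset.mem_univ n₀)
      rw [hsum] at this
      linarith
    have hs0 : 0 ≤ ∑ n ∈ Finset.univ.erase n₀, Real.sqrt (p n) :=
      Finset.sum_nonneg fun n _ => Real.sqrt_nonneg _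
    have h1 : ∑ n ∈ Finset.univ.erase n₀, p n
        ≤ (∑ n ∈ Finset.univ.erase n₀, Real.sqrt (p n)) ^ 2 := by
      calc ∑ n ∈ Finset.univ.erase n₀, p n
          = ∑ n ∈ Finset.univ.erase n₀, (Real.sqrt (p n)) ^ 2 := by
            apply Finset.sum_congr rfl
            intro n _
            rw [Real.sq_sqrt (hp0 n)]
        _ ≤ _ := Finset.sum_sq_le_sq_sum_of_nonneg fun n _ => Real.sqrt_nonneg _
    have h2 : Real.sqrt (1 - t ^ 2) ≤ ∑ n ∈ Finset.univ.erase n₀, Real.sqrt (p n) := by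
      rw [← Real.sqrt_sq hs0]
      apply Real.sqrt_le_sqrt
      linarith [h1, hpt, herase]
    have hsplit : S = t + ∑ n ∈ Finset.univ.erase n₀, Real.sqrt (p n) := by
      rw [hSdef, ← Finset.add_sum_erase Finset.univ _ (Finset.mem_univ n₀)]
    rw [hsplit]
    linarith
  have hS0 : 0 ≤ S := Finset.sum_nonneg fun n _ => Real.sqrt_nonneg _
  have hSS : 1 + Real.sqrt (1 - t ^ 2) / t ≤ S * S := by
    have hf1 : 1 / t ≤ S := by
      rw [div_le_iff₀ ht0]
      linarith [hS1, mul_comm t S]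
    have hf2 : 0 ≤ t + Real.sqrt (1 - t ^ 2) := by positivity
    have := mul_le_mul hf1 hS2 hf2 hS0
    calc 1 + Real.sqrt (1 - t ^ 2) / t = 1 / t * (t + Real.sqrt (1 - t ^ 2)) := by
          field_simp
      _ ≤ S * S := this
  have hlow : Real.sqrt (2 - 2 * t) ≤ S * S - 1 := by
    have hstep : Real.sqrt (2 - 2 * t) ≤ Real.sqrt (1 - t ^ 2) / t := by
      rw [le_div_iff₀ ht0]
      have h2t : (0 : ℝ) ≤ 2 - 2 * t := by linarith
      calc Real.sqrt (2 - 2 * t) * t = Real.sqrt ((2 - 2 * t) * t ^ 2) := by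
            rw [Real.sqrt_mul h2t, Real.sqrt_sq ht0.le]
        _ ≤ Real.sqrt (1 - t ^ 2) := by
            apply Real.sqrt_le_sqrt
            nlinarith [sq_nonneg (1 - t)]
    linarith
  -- upper bound on each off-diagonal term
  have hterm : ∀ n m : Fin (twoJ + 1), n ≠ m →
      Real.sqrt (p n * p m) ≤ Real.sqrt (2 - 2 * t) := by
    intro n m hnm
    have hbound : ∀ k, k ≠ n₀ → p k ≤ 1 - p n₀ := by
      intro k hk
      have hsub : p k + p n₀ ≤ ∑ n, p n := by
        have h := Finset.sum_le_sum_of_subset_of_nonneg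
          (Finset.subset_univ ({k, n₀} : Finset (Fin (twoJ + 1))))
          (fun i _ _ => hp0 i)
        rwa [Finset.sum_pair hk] at h
      rw [hsum] at hsub
      linarith
    apply Real.sqrt_le_sqrt
    rcases eq_or_ne n n₀ with h | h
    · have hm : m ≠ n₀ := by rw [← h]; exact hnm.symm
      have := hbound m hm
      nlinarith [hp0 n, hp0 m, hp1 n, sq_nonneg (1 - t)]
    · have := hbound n h
      nlinarith [hp0 n, hp0 m, hp1 m, sq_nonneg (1 - t)]
  -- upper bound on the whole sum
  have hsqrt0 : 0 ≤ Real.sqrt (2 - 2 * t) := Real.sqrt_nonneg _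
  have hup : (∑ n, ∑ m, (if n ≠ m then Real.sqrt (p n * p m) else 0))
      ≤ ((twoJ : ℝ) + 1) * (twoJ : ℝ) * Real.sqrt (2 - 2 * t) := by
    calc (∑ n, ∑ m, (if n ≠ m then Real.sqrt (p n * p m) else 0))
        ≤ ∑ n : Fin (twoJ + 1), ∑ m : Fin (twoJ + 1),
            (if n ≠ m then Real.sqrt (2 - 2 * t) else 0) := by
          apply Finset.sum_le_sum
          intro n _
          apply Finset.sum_le_sum
          intro m _
          rcases eq_or_ne n m with h | h
          · simp [h]
          · simpa [h] using hterm n m h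
      _ = ((twoJ : ℝ) + 1) * (twoJ : ℝ) * Real.sqrt (2 - 2 * t) := by
          have hin : ∀ n : Fin (twoJ + 1), (∑ m : Fin (twoJ + 1),
              (if n ≠ m then Real.sqrt (2 - 2 * t) else 0))
              = (twoJ : ℝ) * Real.sqrt (2 - 2 * t) := by
            intro n
            have hpt2 : ∀ m : Fin (twoJ + 1), (if n ≠ m then Real.sqrt (2 - 2 * t) else 0)
                = Real.sqrt (2 - 2 * t) - (if n = m then Real.sqrt (2 - 2 * t) else 0) := by
              intro m
              by_cases h : n = m <;> simp [h]
            rw [Finset.sum_congr rfl (fun m _ => hpt2 m), Finset.sum_sub_distrib,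
              Finset.sum_ite_eq]
            simp [Finset.card_univ]
            ring
          rw [Finset.sum_congr rfl (fun n _ => hin n)]
          simp [Finset.card_univ]
          ring
  constructor
  · rw [key]
    have : D ≤ S * S - 1 := le_trans hDle hlow
    linarith
  · rw [key]
    have h1 : S * S - 1 ≤ ((twoJ : ℝ) + 1) * (twoJ : ℝ) * D := by
      rw [← key]
      calc (∑ n, ∑ m, (if n ≠ m then Real.sqrt (p n * p m) else 0))
          ≤ ((twoJ : ℝ) + 1) * (twoJ : ℝ) * Real.sqrt (2 - 2 * t) := hup
        _ ≤ ((twoJ : ℝ) + 1) * (twoJ : ℝ) * D := by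
            apply mul_le_mul_of_nonneg_left hDge
            positivity
    nlinarith [h1]
end

section
/- With $d_B(\rho,A_{\bar n})=\sqrt{2-2\sqrt{\operatorname{Tr}(\rho A_{\bar n})}}$ and $\rho_\xi$ the $\xi$-parametrized exponential family state, there exist positive constants such that for $\xi$ small enough, $\frac12\min_{k\neq\bar n}\sqrt{\tfrac{\operatorname{Tr}(\bar\rho_0 A_k)}{\operatorname{Tr}(\bar\rho_0 A_{\bar n})}}\,\|\xi\| \leq d_B(\rho_\xi,A_{\bar n}) \leq 2\max_{k\neq\bar n}\sqrt{\tfrac{\operatorname{Tr}(\bar\rho_0 A_k)}{\operatorname{Tr}(\bar\rho_0 A_{\bar n})}}\,\|\xi\|$. -/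
open Matrix BigOperators
open scoped ComplexOrder

/-- The `ξ`-parametrized (normalized) exponential family state `ρ_ξ`. -/
noncomputable def rhoXi {N : ℕ} (ρ0 : Matrix (Fin N) (Fin N) ℂ)
    (A : Fin N → Matrix (Fin N) (Fin N) ℂ) (nbar : Fin N) (ξ : Fin N → ℝ) :
    Matrix (Fin N) (Fin N) ℂ :=
  (((ρ0 * A nbar).trace.re +
      ∑ k ∈ Finset.univ.erase nbar, (ξ k) ^ 2 * ((ρ0 * A k).trace.re))⁻¹ : ℝ) •
    (A nbar * ρ0 * A nbar
      + ∑ k ∈ Finset.univ.erase nbar, (ξ k : ℂ) • (A k * ρ0 * A nbar + A nbar * ρ0 * A k)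
      + ∑ k ∈ Finset.univ.erase nbar, ∑ j ∈ Finset.univ.erase nbar,
          ((ξ k * ξ j : ℝ) : ℂ) • (A k * ρ0 * A j))

lemma trace_rhoXi_mul {N : ℕ} (ρ0 : Matrix (Fin N) (Fin N) ℂ)
    (A : Fin N → Matrix (Fin N) (Fin N) ℂ)
    (horth : ∀ j k, A j * A k = if j = k then A j else 0)
    (nbar : Fin N) (ξ : Fin N → ℝ) :
    ((rhoXi ρ0 A nbar ξ * A nbar).trace).re =
      (((ρ0 * A nbar).trace.re +
        ∑ k ∈ Finset.univ.erase nbar, (ξ k)^2 * ((ρ0 * A k).trace.re))⁻¹) *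
        ((ρ0 * A nbar).trace).re := by
  have hAn : A nbar * A nbar = A nbar := by simpa using horth nbar nbar
  unfold rhoXi
  rw [Matrix.smul_mul, add_mul, add_mul, Finset.sum_mul, Finset.sum_mul]
  have hT1 : ((A nbar * ρ0 * A nbar) * A nbar).trace = (ρ0 * A nbar).trace := by
    rw [mul_assoc (A nbar * ρ0), hAn, Matrix.trace_mul_comm, ← mul_assoc, hAn,
      Matrix.trace_mul_comm]
  have hT2 : ∀ k ∈ Finset.univ.erase nbar,
      (((ξ k : ℂ) • (A k * ρ0 * A nbar + A nbar * ρ0 * A k)) * A nbar).trace = 0 := by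
    intro k hk
    have hk' : k ≠ nbar := Finset.ne_of_mem_erase hk
    rw [Matrix.smul_mul, Matrix.trace_smul, add_mul]
    have e1 : (A k * ρ0 * A nbar) * A nbar = A k * ρ0 * A nbar := by
      rw [mul_assoc (A k * ρ0), hAn]
    have e2 : (A nbar * ρ0 * A k) * A nbar = 0 := by
      rw [mul_assoc (A nbar * ρ0), horth k nbar, if_neg hk', mul_zero]
    have e3 : (A k * ρ0 * A nbar).trace = 0 := by
      rw [Matrix.trace_mul_comm, ← mul_assoc, horth nbar k, if_neg (Ne.symm hk'),
        zero_mul, Matrix.trace_zero]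
    rw [e1, e2, Matrix.trace_add, e3, Matrix.trace_zero, add_zero, smul_zero]
  have hT3 : ∀ k ∈ Finset.univ.erase nbar,
      ((∑ j ∈ Finset.univ.erase nbar, ((ξ k * ξ j : ℝ) : ℂ) • (A k * ρ0 * A j)) * A nbar).trace
        = 0 := by
    intro k hk
    rw [Finset.sum_mul, Matrix.trace_sum]
    refine Finset.sum_eq_zero fun j hj => ?_
    have hj' : j ≠ nbar := Finset.ne_of_mem_erase hj
    rw [Matrix.smul_mul, mul_assoc (A k * ρ0), horth j nbar, if_neg hj', mul_zero,
      smul_zero, Matrix.trace_zero]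
  rw [Matrix.trace_smul, Matrix.trace_add, Matrix.trace_add, Matrix.trace_sum,
    Matrix.trace_sum, Finset.sum_congr rfl hT2, Finset.sum_congr rfl hT3,
    Finset.sum_const_zero, add_zero, add_zero, hT1]
  simp only [add_zero, Complex.real_smul, Complex.mul_re, Complex.ofReal_re,
    Complex.ofReal_im, zero_mul, sub_zero]

set_option maxHeartbeats 1000000 in
/-- For `ξ` small enough, the Bures distance `d_B(ρ_ξ, A_{n̄}) = √(2-2√Tr(ρ_ξA_{n̄}))`
is comparable with `‖ξ‖`:
`½ min_{k≠n̄}√(Tr(ρ̄₀Aₖ)/Tr(ρ̄₀A_{n̄})) ‖ξ‖ ≤ d_B(ρ_ξ,A_{n̄}) ≤ 2 max_{k≠n̄}√(Tr(ρ̄₀Aₖ)/Tr(ρ̄₀A_{n̄})) ‖ξ‖`. -/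
theorem bures_rhoXi_comparison {N : ℕ}
    (ρ0 : Matrix (Fin N) (Fin N) ℂ) (hρ0 : ρ0.PosSemidef)
    (A : Fin N → Matrix (Fin N) (Fin N) ℂ)
    (hHerm : ∀ j, (A j).IsHermitian)
    (horth : ∀ j k, A j * A k = if j = k then A j else 0)
    (hsum : ∑ j, A j = 1)
    (hrank : ∀ j, (A j).trace = 1)
    (htr : ∀ k, 0 < ((ρ0 * A k).trace).re)
    (nbar : Fin N) (hne : (Finset.univ.erase nbar).Nonempty)
    (ξ : Fin N → ℝ)
    (hsmall : ∑ k ∈ Finset.univ.erase nbar, (ξ k) ^ 2 * ((ρ0 * A k).trace).re ≤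
      ((ρ0 * A nbar).trace).re) :
    (1 / 2) *
        ((Finset.univ.erase nbar).inf' hne fun k =>
          Real.sqrt (((ρ0 * A k).trace).re / ((ρ0 * A nbar).trace).re)) *
        Real.sqrt (∑ k ∈ Finset.univ.erase nbar, (ξ k) ^ 2) ≤
      Real.sqrt (2 - 2 * Real.sqrt (((rhoXi ρ0 A nbar ξ * A nbar).trace).re)) ∧
    Real.sqrt (2 - 2 * Real.sqrt (((rhoXi ρ0 A nbar ξ * A nbar).trace).re)) ≤
      2 *
        ((Finset.univ.erase nbar).sup' hne fun k =>
          Real.sqrt (((ρ0 * A k).trace).re / ((ρ0 * A nbar).trace).re)) *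
        Real.sqrt (∑ k ∈ Finset.univ.erase nbar, (ξ k) ^ 2) := by
  classical
  set t := ((ρ0 * A nbar).trace).re with ht
  have ht0 : 0 < t := htr nbar
  set S := ∑ k ∈ Finset.univ.erase nbar, (ξ k) ^ 2 * ((ρ0 * A k).trace).re with hSdef
  have hS0 : 0 ≤ S := Finset.sum_nonneg fun k _ =>
    mul_nonneg (sq_nonneg _) (le_of_lt (htr k))
  set Sig := ∑ k ∈ Finset.univ.erase nbar, (ξ k) ^ 2 with hSigdef
  have hSig0 : 0 ≤ Sig := Finset.sum_nonneg fun k _ => sq_nonneg _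
  set m := (Finset.univ.erase nbar).inf' hne fun k =>
    Real.sqrt (((ρ0 * A k).trace).re / t) with hm
  set M := (Finset.univ.erase nbar).sup' hne fun k =>
    Real.sqrt (((ρ0 * A k).trace).re / t) with hM
  obtain ⟨k0, hk0⟩ := id hne
  have hm0 : 0 ≤ m := Finset.le_inf' hne _ fun k _ => Real.sqrt_nonneg _
  have hM0 : 0 ≤ M := le_trans (Real.sqrt_nonneg _)
    (Finset.le_sup' (fun k => Real.sqrt (((ρ0 * A k).trace).re / t)) hk0)
  -- bounds on S
  have hSl : m ^ 2 * t * Sig ≤ S := by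
    rw [hSdef, hSigdef, Finset.mul_sum]
    refine Finset.sum_le_sum fun k hk => ?_
    have h1 : m ≤ Real.sqrt (((ρ0 * A k).trace).re / t) := Finset.inf'_le _ hk
    have h2 : m ^ 2 ≤ ((ρ0 * A k).trace).re / t := by
      calc m ^ 2 ≤ Real.sqrt (((ρ0 * A k).trace).re / t) ^ 2 := by
            exact pow_le_pow_left₀ hm0 h1 2
        _ = ((ρ0 * A k).trace).re / t := Real.sq_sqrt
            (div_nonneg (le_of_lt (htr k)) (le_of_lt ht0))
      -- done
    have := mul_le_mul_of_nonneg_left h2 (mul_nonneg (sq_nonneg (ξ k)) (le_of_lt ht0))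
    calc m ^ 2 * t * (ξ k) ^ 2 = (ξ k)^2 * t * (m^2) := by ring
      _ ≤ (ξ k)^2 * t * (((ρ0 * A k).trace).re / t) := this
      _ = (ξ k)^2 * ((ρ0 * A k).trace).re := by
          field_simp
  have hSu : S ≤ M ^ 2 * t * Sig := by
    rw [hSdef, hSigdef, Finset.mul_sum]
    refine Finset.sum_le_sum fun k hk => ?_
    have h1 : Real.sqrt (((ρ0 * A k).trace).re / t) ≤ M :=
      Finset.le_sup' (fun k => Real.sqrt (((ρ0 * A k).trace).re / t)) hk
    have h2 : ((ρ0 * A k).trace).re / t ≤ M ^ 2 := by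
      calc ((ρ0 * A k).trace).re / t
          = Real.sqrt (((ρ0 * A k).trace).re / t) ^ 2 := (Real.sq_sqrt
            (div_nonneg (le_of_lt (htr k)) (le_of_lt ht0))).symm
        _ ≤ M ^ 2 := pow_le_pow_left₀ (Real.sqrt_nonneg _) h1 2
    have := mul_le_mul_of_nonneg_left h2 (mul_nonneg (sq_nonneg (ξ k)) (le_of_lt ht0))
    calc (ξ k)^2 * ((ρ0 * A k).trace).re = (ξ k)^2 * t * (((ρ0 * A k).trace).re / t) := by
          field_simp
      _ ≤ (ξ k)^2 * t * (M^2) := this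
      _ = M ^ 2 * t * (ξ k)^2 := by ring
  -- trace value
  have htrv : ((rhoXi ρ0 A nbar ξ * A nbar).trace).re = (t + S)⁻¹ * t :=
    trace_rhoXi_mul ρ0 A horth nbar ξ
  set p := (t + S)⁻¹ * t with hp
  have htS : 0 < t + S := by linarith
  have hp0 : 0 ≤ p := le_of_lt (mul_pos (inv_pos.2 htS) ht0)
  have hp1 : p ≤ 1 := by
    rw [hp, inv_mul_le_iff₀ htS]; linarith
  set s := Real.sqrt p with hs
  have hs0 : 0 ≤ s := Real.sqrt_nonneg _
  have hs1 : s ≤ 1 := by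
    rw [hs]; nlinarith [Real.sqrt_le_sqrt hp1, Real.sqrt_one]
  have hss : s * s = p := Real.mul_self_sqrt hp0
  have hpeq : p * (t + S) = t := by
    rw [hp]; field_simp
  -- bounds on 2 - 2s
  have h1mp : (1 - p) * (t + S) = S := by nlinarith [hpeq]
  have h2 : S ≤ (1 - p) * (2 * t) := by
    nlinarith [h1mp, mul_nonneg (by linarith : (0:ℝ) ≤ 1 - p) (by linarith : (0:ℝ) ≤ t - S)]
  have hA : 1 - p ≤ 2 * (1 - s) := by nlinarith [hss, hs1, hs0]
  have hC : m ^ 2 * Sig ≤ 2 * (1 - p) := by nlinarith [hSl, h2, ht0]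
  have hD : 1 - s ≤ 1 - p := by nlinarith [hss, hs0, hs1]
  have hE : (1 - p) * t ≤ S := by
    nlinarith [h1mp, mul_nonneg (by linarith : (0:ℝ) ≤ 1 - p) hS0]
  have hF : 1 - p ≤ M ^ 2 * Sig := by nlinarith [hE, hSu, ht0]
  have key1 : m ^ 2 * Sig / 4 ≤ 2 - 2 * s := by linarith
  have key2 : 2 - 2 * s ≤ 4 * (M ^ 2 * Sig) := by
    have : 0 ≤ M ^ 2 * Sig := by positivity
    linarith
  rw [htrv, ← hs]
  constructor
  · have h := Real.sqrt_le_sqrt key1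
    calc 1 / 2 * m * Real.sqrt Sig = Real.sqrt (m ^ 2 * Sig / 4) := by
          rw [show m ^ 2 * Sig / 4 = (1/2 * m)^2 * Sig by ring, Real.sqrt_mul (by positivity),
            Real.sqrt_sq (by positivity)]
      _ ≤ Real.sqrt (2 - 2 * s) := h
  · have h := Real.sqrt_le_sqrt key2
    calc Real.sqrt (2 - 2 * s) ≤ Real.sqrt (4 * (M ^ 2 * Sig)) := h
      _ = 2 * M * Real.sqrt Sig := by
          rw [show 4 * (M ^ 2 * Sig) = (2 * M)^2 * Sig by ring, Real.sqrt_mul (by positivity),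
            Real.sqrt_sq (by positivity)]
end
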